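/- Let c > 0 and d > 0 be real numbers, and let x : [0, ∞) → ℝ be a differentiable function with x(0) ≥ 0 and x'(t) ≤ x(t)·(c − d·x(t)) for all t ≥ 0. Then limsup_{t→∞} x(t) ≤ c/d. -/

import Mathlib

open Filter Set

/-- Logistic comparison lemma (upper bound): if `x' ≤ x (c − d x)` on `[0, ∞)`
with `x 0 ≥ 0` and `c, d > 0`, then `limsup_{t→∞} x t ≤ c / d`. -/
theorem limsup_le_of_logistic_upper (c d : ℝ) (hc : 0 < c) (hd : 0 < d)
    (x x' : ℝ → ℝ)
    (hderiv : ∀ t ≥ (0 : ℝ), HasDerivAt x (x' t) t)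
    (hx0 : 0 ≤ x 0)
    (hineq : ∀ t ≥ (0 : ℝ), x' t ≤ x t * (c - d * x t)) :
    Filter.limsup x Filter.atTop ≤ c / d := by
  have hcont : ContinuousOn x (Ici 0) := fun t ht =>
    ((hderiv t ht).continuousAt).continuousWithinAt
  have hdx : ∀ t ≥ (0:ℝ), deriv x t = x' t := fun t ht => (hderiv t ht).deriv
  -- Lemma A: once below a barrier K > c/d, x stays below K
  have stay : ∀ K, c / d < K → ∀ a b : ℝ, 0 ≤ a → a ≤ b → x a ≤ K → x b ≤ K := by
    intro K hK a b ha hab hxa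
    by_contra h
    push_neg at h
    have hab' : a < b := lt_of_le_of_ne hab (by rintro rfl; exact absurd hxa (not_le.mpr h))
    set S := Icc a b ∩ x ⁻¹' (Iic K) with hS
    have hcontab : ContinuousOn x (Icc a b) := hcont.mono (fun t ht => le_trans ha ht.1)
    have hSclosed : IsClosed S :=
      hcontab.preimage_isClosed_of_isClosed isClosed_Icc isClosed_Iic
    have hSne : S.Nonempty := ⟨a, ⟨le_refl a, hab⟩, hxa⟩
    have hSbdd : BddAbove S := ⟨b, fun t ht => ht.1.2⟩
    obtain ⟨huS, hsup⟩ : sSup S ∈ S ∧ IsLUB S (sSup S) :=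
      ⟨hSclosed.csSup_mem hSne hSbdd, isLUB_csSup hSne hSbdd⟩
    set u := sSup S with hu
    have hub : u ≤ b := huS.1.2
    have hau : a ≤ u := huS.1.1
    have hxu : x u ≤ K := huS.2
    have hub' : u < b := lt_of_le_of_ne hub (fun h' => (not_le.mpr h) (h' ▸ hxu))
    have hmid : ∀ t ∈ Ioo u b, K < x t := by
      intro t ht
      by_contra h'
      push_neg at h'
      have : t ∈ S := ⟨⟨le_trans hau ht.1.le, ht.2.le⟩, h'⟩
      exact absurd (le_csSup hSbdd this) (not_le.mpr ht.1)
    have hanti : StrictAntiOn x (Icc u b) := by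
      apply strictAntiOn_of_deriv_neg (convex_Icc u b)
        (hcontab.mono (Icc_subset_Icc hau le_rfl))
      intro t ht
      rw [interior_Icc] at ht
      have ht0 : (0:ℝ) ≤ t := le_trans (le_trans ha hau) ht.1.le
      rw [hdx t ht0]
      have hxt : c / d < x t := lt_trans hK (hmid t ht)
      have hxt0 : 0 < x t := lt_trans (div_pos hc hd) hxt
      have hneg : c - d * x t < 0 := by
        have := (div_lt_iff₀' hd).mp hxt
        linarith
      calc x' t ≤ x t * (c - d * x t) := hineq t ht0
        _ < 0 := mul_neg_of_pos_of_neg hxt0 hneg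
    have := hanti (left_mem_Icc.mpr hub) (right_mem_Icc.mpr hub) hub'
    linarith
  -- Step: for each K > c/d, eventually x ≤ K
  have hev : ∀ K, c / d < K → ∀ᶠ t in atTop, x t ≤ K := by
    intro K hK
    have hK0 : 0 < K := lt_trans (div_pos hc hd) hK
    obtain ⟨T, hT0, hxT⟩ : ∃ T ≥ (0:ℝ), x T ≤ K := by
      by_contra hno
      push_neg at hno
      set δ := d * K - c with hδ
      have hδ0 : 0 < δ := by
        have := (div_lt_iff₀' hd).mp hK
        linarith
      have key : ∀ s ≥ (0:ℝ), x' s ≤ -(δ * K) := by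
        intro s hs
        have hxs : K < x s := hno s hs
        have h1 : c - d * x s ≤ -δ := by nlinarith
        have h2 : x s * (c - d * x s) ≤ x s * (-δ) :=
          mul_le_mul_of_nonneg_left h1 (le_of_lt (lt_trans hK0 hxs))
        have h3 : x s * (-δ) ≤ K * (-δ) := by nlinarith
        calc x' s ≤ x s * (c - d * x s) := hineq s hs
          _ ≤ K * (-δ) := le_trans h2 h3
          _ = -(δ * K) := by ring
      have hD : ∀ t ≥ (0:ℝ), HasDerivAt (fun s => x s + δ * K * s) (x' t + δ * K) t := by
        intro t ht0
        have := (hderiv t ht0).add ((hasDerivAt_id t).const_mul (δ * K))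
        rw [mul_one] at this
        exact this
      have hg : AntitoneOn (fun s => x s + δ * K * s) (Ici 0) := by
        apply antitoneOn_of_deriv_nonpos (convex_Ici 0)
        · exact hcont.add (continuous_const.mul continuous_id).continuousOn
        · intro t ht
          rw [interior_Ici] at ht
          exact (hD t ht.le).differentiableAt.differentiableWithinAt
        · intro t ht
          rw [interior_Ici] at ht
          rw [(hD t ht.le).deriv]
          linarith [key t ht.le]
      have hδK : 0 < δ * K := mul_pos hδ0 hK0
      have hq0 : 0 ≤ (x 0 - K) / (δ * K) :=
        div_nonneg (by linarith [hno 0 le_rfl]) hδK.le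
      have ht₀0 : (0:ℝ) ≤ (x 0 - K) / (δ * K) + 1 := by linarith
      have hmono := hg (mem_Ici.mpr le_rfl) (mem_Ici.mpr ht₀0) ht₀0
      simp only [mul_zero, add_zero] at hmono
      have heq : δ * K * ((x 0 - K) / (δ * K) + 1) = x 0 - K + δ * K := by
        field_simp
      have := hno _ ht₀0
      nlinarith
    filter_upwards [eventually_ge_atTop T] with t ht
    exact stay K hK T t hT0 ht hxT
  -- conclude
  rw [Filter.limsup_eq]
  by_cases hbdd : BddBelow {a | ∀ᶠ t in atTop, x t ≤ a}
  · apply le_of_forall_pos_le_add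
    intro ε hε
    exact csInf_le hbdd (hev (c / d + ε) (by linarith))
  · rw [Real.sInf_of_not_bddBelow hbdd]
    positivity
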